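/- Let G=(V,E) be a finite graph with positive edge weights W and n = |V|, and let σ be an ordering of V that minimizes SVC_G over all orderings. For t ∈ {1,…,n}, let d_t denote the total weight of edges newly covered at step t, i.e., d_t = u_{t−1} − u_t where u_t is the total weight of edges with both endpoints outside σ({1,…,t}). Then the sequence (d_t) is non-increasing: d_{t+1} ≤ d_t for all 1 ≤ t ≤ n−1. -/
import Mathlib


/-- The position (in `{1, …, n}`) at which vertex `v` is visited by the ordering `σ`. -/
def vertexPos {V : Type*} [Fintype V] (σ : Fin (Fintype.card V) ≃ V) (v : V) : ℕ :=
  (σ.symm v : ℕ) + 1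

/-- The cover time `c_{σ,e}` of an edge with endpoints `u` and `w` under the ordering `σ`. -/
def coverTime {V : Type*} [Fintype V] (σ : Fin (Fintype.card V) ≃ V) (u w : V) : ℕ :=
  min (vertexPos σ u) (vertexPos σ w)

/-- The sum vertex cover value `SVC_G(σ) = Σ_e W_e · c_{σ,e}` of a weighted multigraph. -/
noncomputable def SVC {V ι : Type*} [Fintype V] [Fintype ι]
    (a b : ι → V) (W : ι → ℝ) (σ : Fin (Fintype.card V) ≃ V) : ℝ :=
  ∑ e : ι, W e * (coverTime σ (a e) (b e) : ℝ)

/-- `u_t`: the total weight of edges having both endpoints outside the first `t` visited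
vertices (equivalently, edges with cover time `> t`). -/
noncomputable def uncoveredWeight {V ι : Type*} [Fintype V] [Fintype ι]
    (a b : ι → V) (W : ι → ℝ) (σ : Fin (Fintype.card V) ≃ V) (t : ℕ) : ℝ :=
  ∑ e ∈ Finset.univ.filter (fun e : ι => t < coverTime σ (a e) (b e)), W e

section Aux

variable {V ι : Type*} [Fintype V] [Fintype ι]

lemma coverTime_le_card (σ : Fin (Fintype.card V) ≃ V) (u w : V) :
    coverTime σ u w ≤ Fintype.card V := by
  have h1 : (σ.symm u : ℕ) < Fintype.card V := (σ.symm u).isLt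
  unfold coverTime vertexPos
  exact le_trans (min_le_left _ _) h1

lemma SVC_eq_sum_uncoveredWeight (a b : ι → V) (W : ι → ℝ) (σ : Fin (Fintype.card V) ≃ V) :
    SVC a b W σ = ∑ s ∈ Finset.range (Fintype.card V), uncoveredWeight a b W σ s := by
  unfold SVC uncoveredWeight
  simp_rw [Finset.sum_filter]
  rw [Finset.sum_comm]
  refine Finset.sum_congr rfl fun e _ => ?_
  have hc : coverTime σ (a e) (b e) ≤ Fintype.card V := coverTime_le_card σ _ _
  rw [← Finset.sum_filter]
  have hfil : (Finset.range (Fintype.card V)).filter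
      (fun s => s < coverTime σ (a e) (b e)) = Finset.range (coverTime σ (a e) (b e)) := by
    ext s
    simp only [Finset.mem_filter, Finset.mem_range]
    omega
  rw [hfil, Finset.sum_const, Finset.card_range, nsmul_eq_mul, mul_comm]

lemma uncoveredWeight_eq_sum_ite (a b : ι → V) (W : ι → ℝ) (σ : Fin (Fintype.card V) ≃ V)
    (s : ℕ) :
    uncoveredWeight a b W σ s
      = ∑ e : ι, if s < coverTime σ (a e) (b e) then W e else 0 := by
  rw [uncoveredWeight, Finset.sum_filter]

end Aux

/-- Let `σ` be an ordering minimizing `SVC_G` for a finite graph `G` with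
positive edge weights, and let `d_t = u_{t−1} − u_t` be the weight of edges newly covered at
step `t`.  Then `(d_t)` is non-increasing: `d_{t+1} ≤ d_t` for `1 ≤ t ≤ n−1`. -/
theorem newly_covered_weight_nonincreasing {V ι : Type*} [Fintype V] [Fintype ι]
    (a b : ι → V) (W : ι → ℝ) (hW : ∀ e, 0 < W e)
    (σ : Fin (Fintype.card V) ≃ V)
    (hopt : ∀ σ' : Fin (Fintype.card V) ≃ V, SVC a b W σ ≤ SVC a b W σ')
    (t : ℕ) (ht1 : 1 ≤ t) (ht2 : t + 1 ≤ Fintype.card V) :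
    uncoveredWeight a b W σ t - uncoveredWeight a b W σ (t + 1) ≤
      uncoveredWeight a b W σ (t - 1) - uncoveredWeight a b W σ t := by
  classical
  have hi : t - 1 < Fintype.card V := by omega
  have hj : t < Fintype.card V := by omega
  set i : Fin (Fintype.card V) := ⟨t - 1, hi⟩ with hidef
  set j : Fin (Fintype.card V) := ⟨t, hj⟩ with hjdef
  set σ' : Fin (Fintype.card V) ≃ V := (Equiv.swap i j).trans σ with hσ'
  have hival : (i : ℕ) = t - 1 := rfl
  have hjval : (j : ℕ) = t := rfl
  -- positions under σ'
  have hpos : ∀ v : V, vertexPos σ' v =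
      if vertexPos σ v = t then t + 1 else if vertexPos σ v = t + 1 then t
      else vertexPos σ v := by
    intro v
    have hsymm : σ'.symm v = Equiv.swap i j (σ.symm v) := by
      simp [hσ', Equiv.symm_trans_apply]
    have hp' : vertexPos σ' v = ((Equiv.swap i j (σ.symm v) : Fin (Fintype.card V)) : ℕ) + 1 := by
      rw [vertexPos, hsymm]
    rcases eq_or_ne (σ.symm v) i with h1 | h1
    · rw [hp', h1, Equiv.swap_apply_left]
      have hv1 : vertexPos σ v = t - 1 + 1 := by rw [vertexPos, h1, hival]
      rw [hv1, hjval]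
      split_ifs <;> omega
    · rcases eq_or_ne (σ.symm v) j with h2 | h2
      · rw [hp', h2, Equiv.swap_apply_right]
        have hv1 : vertexPos σ v = t + 1 := by rw [vertexPos, h2, hjval]
        rw [hv1, hival]
        split_ifs <;> omega
      · rw [hp', Equiv.swap_apply_of_ne_of_ne h1 h2]
        have hv1 : vertexPos σ v = (σ.symm v : ℕ) + 1 := rfl
        have hne1 : (σ.symm v : ℕ) ≠ t - 1 := fun h => h1 (Fin.ext h)
        have hne2 : (σ.symm v : ℕ) ≠ t := fun h => h2 (Fin.ext h)
        rw [hv1]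
        split_ifs <;> omega
  -- condition for unchanged levels
  have hiff1 : ∀ (s : ℕ), s ≠ t → ∀ v : V, (s < vertexPos σ' v ↔ s < vertexPos σ v) := by
    intro s hs v
    rw [hpos v]
    split_ifs with h1 h2 <;> omega
  -- condition at level t under σ'
  have hiff2 : ∀ v : V, (t < vertexPos σ' v ↔ t ≤ vertexPos σ v ∧ vertexPos σ v ≠ t + 1) := by
    intro v
    rw [hpos v]
    split_ifs with h1 h2 <;> omega
  -- uncovered weight unchanged away from level t
  have hu_eq : ∀ s : ℕ, s ≠ t →
      uncoveredWeight a b W σ' s = uncoveredWeight a b W σ s := by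
    intro s hs
    unfold uncoveredWeight
    congr 1
    apply Finset.filter_congr
    intro e _
    unfold coverTime
    simp only [Nat.lt_min, hiff1 s hs]
  -- optimality gives u_t(σ) ≤ u_t(σ')
  have hkey : uncoveredWeight a b W σ t ≤ uncoveredWeight a b W σ' t := by
    have h := hopt σ'
    rw [SVC_eq_sum_uncoveredWeight, SVC_eq_sum_uncoveredWeight] at h
    have htmem : t ∈ Finset.range (Fintype.card V) := Finset.mem_range.2 hj
    rw [← Finset.sum_erase_add _ _ htmem, ← Finset.sum_erase_add _ _ htmem] at h
    have heq : ∑ s ∈ (Finset.range (Fintype.card V)).erase t, uncoveredWeight a b W σ s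
        = ∑ s ∈ (Finset.range (Fintype.card V)).erase t, uncoveredWeight a b W σ' s := by
      refine Finset.sum_congr rfl fun s hs => ?_
      exact (hu_eq s (Finset.ne_of_mem_erase hs)).symm
    rw [heq] at h
    linarith
  -- the combinatorial inequality from the swap
  have hD : uncoveredWeight a b W σ' t + uncoveredWeight a b W σ t ≤
      uncoveredWeight a b W σ (t - 1) + uncoveredWeight a b W σ (t + 1) := by
    rw [uncoveredWeight_eq_sum_ite, uncoveredWeight_eq_sum_ite,
      uncoveredWeight_eq_sum_ite, uncoveredWeight_eq_sum_ite,
      ← Finset.sum_add_distrib, ← Finset.sum_add_distrib]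
    apply Finset.sum_le_sum
    intro e _
    have hWe : (0:ℝ) ≤ W e := (hW e).le
    set pa := vertexPos σ (a e) with hpa
    set pb := vertexPos σ (b e) with hpb
    have hc' : t < coverTime σ' (a e) (b e) ↔
        ((t ≤ pa ∧ pa ≠ t + 1) ∧ (t ≤ pb ∧ pb ≠ t + 1)) := by
      unfold coverTime
      rw [Nat.lt_min, hiff2, hiff2]
    have hct : ∀ s : ℕ, (s < coverTime σ (a e) (b e) ↔ s < pa ∧ s < pb) := by
      intro s; unfold coverTime; rw [Nat.lt_min]
    by_cases h1 : t < coverTime σ' (a e) (b e) <;>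
      by_cases h2 : t < coverTime σ (a e) (b e)
    · -- both: then covered at t+1 and t-1
      have h3 : t - 1 < coverTime σ (a e) (b e) := by
        rw [hct] at h2 ⊢; omega
      have h4 : t + 1 < coverTime σ (a e) (b e) := by
        rw [hc'] at h1; rw [hct] at h2 ⊢; omega
      simp only [h1, h2, h3, h4, if_pos]
      exact le_rfl
    · have h3 : t - 1 < coverTime σ (a e) (b e) := by
        rw [hc'] at h1; rw [hct]; omega
      simp only [h1, if_pos, h2, if_neg, not_false_iff, h3, add_zero]
      have : (0:ℝ) ≤ if t + 1 < coverTime σ (a e) (b e) then W e else 0 := by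
        split_ifs <;> simp [hWe]
      linarith
    · have h3 : t - 1 < coverTime σ (a e) (b e) := by
        rw [hct] at h2 ⊢; omega
      simp only [h1, if_neg, not_false_iff, h2, if_pos, h3, zero_add]
      have : (0:ℝ) ≤ if t + 1 < coverTime σ (a e) (b e) then W e else 0 := by
        split_ifs <;> simp [hWe]
      linarith
    · simp only [h1, h2, if_neg, not_false_iff, add_zero]
      have h3 : (0:ℝ) ≤ if t - 1 < coverTime σ (a e) (b e) then W e else 0 := by
        split_ifs <;> simp [hWe]
      have h4 : (0:ℝ) ≤ if t + 1 < coverTime σ (a e) (b e) then W e else 0 := by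
        split_ifs <;> simp [hWe]
      linarith
  linarith
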